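/- Let ‖·‖ be a norm on ℝ³ with unit ball B, and suppose S is an equilateral set of 6 points at distance 1 such that S splits into triples S₁ = {a₁,a₂,a₃} and S₂ = {b₁,b₂,b₃} lying in two parallel planes, where S₁ is a translate of −S₂ with a_i − a_j = b_j − b_i for all i ≠ j. Then the boundary of B contains the 1-skeleton (union of the 12 edges) of the affine regular octahedron with vertices ±(a_i − b_i), i = 1, 2, 3, and S is homothetic to {±(a₁−b₁), ±(a₂−b₂), ±(a₃−b₃)}. -/
import Mathlib


structure IsNorm3 (N : (Fin 3 → ℝ) → ℝ) : Prop where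
  zero : N 0 = 0
  pos : ∀ x, x ≠ 0 → 0 < N x
  smul : ∀ (r : ℝ) (x), N (r • x) = |r| * N x
  triangle : ∀ x y, N (x + y) ≤ N x + N y

set_option maxHeartbeats 2000000 in
/-- Let `S = {a₁,a₂,a₃,b₁,b₂,b₃}` be an equilateral set of 6 points at distance 1,
with the `aᵢ` and `bᵢ` in two parallel planes, and with `aᵢ - aⱼ = bⱼ - bᵢ` for `i ≠ j`
(`{aᵢ}` a translate of `{-bᵢ}`). Then the boundary of the unit ball contains the
1-skeleton (the 12 edges) of the affine regular octahedron with vertices `±(aᵢ - bᵢ)`,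
and `S` is homothetic to `{±(aᵢ - bᵢ) : i}`. -/
theorem equilateral_six_octahedron_case (N : (Fin 3 → ℝ) → ℝ) (hN : IsNorm3 N)
    (a b : Fin 3 → (Fin 3 → ℝ)) (S : Set (Fin 3 → ℝ))
    (hS : S = {a 0, a 1, a 2, b 0, b 1, b 2}) (hcard : S.ncard = 6)
    (heq : ∀ x ∈ S, ∀ y ∈ S, x ≠ y → N (x - y) = 1)
    (f : (Fin 3 → ℝ) →ₗ[ℝ] ℝ) (hf : f ≠ 0) (c₁ c₂ : ℝ) (hc : c₁ ≠ c₂)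
    (ha : ∀ i, f (a i) = c₁) (hb : ∀ i, f (b i) = c₂)
    (htr : ∀ i j : Fin 3, i ≠ j → a i - a j = b j - b i) :
    (∀ i j : Fin 3, i ≠ j → ∀ ε δ : ℝ, (ε = 1 ∨ ε = -1) → (δ = 1 ∨ δ = -1) →
      segment ℝ (ε • (a i - b i)) (δ • (a j - b j)) ⊆
        frontier {x : Fin 3 → ℝ | N x ≤ 1}) ∧
    ∃ (t : Fin 3 → ℝ) (r : ℝ), 0 < r ∧
      S = (fun x => t + r • x) ''
        ({a 0 - b 0, a 1 - b 1, a 2 - b 2,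
          -(a 0 - b 0), -(a 1 - b 1), -(a 2 - b 2)} : Set (Fin 3 → ℝ)) := by
  -- basic membership
  have ma : ∀ i, a i ∈ S := by intro i; fin_cases i <;> simp [hS]
  have mb : ∀ i, b i ∈ S := by intro i; fin_cases i <;> simp [hS]
  -- cardinality helpers
  have h5card : ∀ x1 x2 x3 x4 x5 : Fin 3 → ℝ,
      ({x1, x2, x3, x4, x5} : Set (Fin 3 → ℝ)).ncard ≤ 5 := by
    intro x1 x2 x3 x4 x5
    have h1 := Set.ncard_insert_le x1 ({x2, x3, x4, x5} : Set (Fin 3 → ℝ))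
    have h2 := Set.ncard_insert_le x2 ({x3, x4, x5} : Set (Fin 3 → ℝ))
    have h3 := Set.ncard_insert_le x3 ({x4, x5} : Set (Fin 3 → ℝ))
    have h4 := Set.ncard_insert_le x4 ({x5} : Set (Fin 3 → ℝ))
    have h5 := Set.ncard_singleton x5
    omega
  have hcon : ∀ x1 x2 x3 x4 x5 : Fin 3 → ℝ,
      S ⊆ ({x1, x2, x3, x4, x5} : Set (Fin 3 → ℝ)) → False := by
    intro x1 x2 x3 x4 x5 hsub
    have h1 := Set.ncard_le_ncard hsub (Set.toFinite _)
    have h2 := h5card x1 x2 x3 x4 x5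
    omega
  -- all pairwise distinctness facts we need
  have hab00 : a 0 ≠ b 0 := fun he => hcon (a 0) (a 1) (a 2) (b 1) (b 2)
    (by rw [hS, ← he]; intro x hx; simp only [Set.mem_insert_iff, Set.mem_singleton_iff] at hx ⊢; tauto)
  have hab11 : a 1 ≠ b 1 := fun he => hcon (a 0) (a 1) (a 2) (b 0) (b 2)
    (by rw [hS, ← he]; intro x hx; simp only [Set.mem_insert_iff, Set.mem_singleton_iff] at hx ⊢; tauto)
  have hab22 : a 2 ≠ b 2 := fun he => hcon (a 0) (a 1) (a 2) (b 0) (b 1)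
    (by rw [hS, ← he]; intro x hx; simp only [Set.mem_insert_iff, Set.mem_singleton_iff] at hx ⊢; tauto)
  have haa01 : a 0 ≠ a 1 := fun he => hcon (a 0) (a 2) (b 0) (b 1) (b 2)
    (by rw [hS, ← he]; intro x hx; simp only [Set.mem_insert_iff, Set.mem_singleton_iff] at hx ⊢; tauto)
  have haa02 : a 0 ≠ a 2 := fun he => hcon (a 0) (a 1) (b 0) (b 1) (b 2)
    (by rw [hS, ← he]; intro x hx; simp only [Set.mem_insert_iff, Set.mem_singleton_iff] at hx ⊢; tauto)
  have haa12 : a 1 ≠ a 2 := fun he => hcon (a 0) (a 1) (b 0) (b 1) (b 2)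
    (by rw [hS, ← he]; intro x hx; simp only [Set.mem_insert_iff, Set.mem_singleton_iff] at hx ⊢; tauto)
  have hab01 : a 0 ≠ b 1 := fun he => hcon (a 0) (a 1) (a 2) (b 0) (b 2)
    (by rw [hS, ← he]; intro x hx; simp only [Set.mem_insert_iff, Set.mem_singleton_iff] at hx ⊢; tauto)
  have hab02 : a 0 ≠ b 2 := fun he => hcon (a 0) (a 1) (a 2) (b 0) (b 1)
    (by rw [hS, ← he]; intro x hx; simp only [Set.mem_insert_iff, Set.mem_singleton_iff] at hx ⊢; tauto)
  have hab10 : a 1 ≠ b 0 := fun he => hcon (a 0) (a 1) (a 2) (b 1) (b 2)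
    (by rw [hS, ← he]; intro x hx; simp only [Set.mem_insert_iff, Set.mem_singleton_iff] at hx ⊢; tauto)
  have hab12 : a 1 ≠ b 2 := fun he => hcon (a 0) (a 1) (a 2) (b 0) (b 1)
    (by rw [hS, ← he]; intro x hx; simp only [Set.mem_insert_iff, Set.mem_singleton_iff] at hx ⊢; tauto)
  have hab20 : a 2 ≠ b 0 := fun he => hcon (a 0) (a 1) (a 2) (b 1) (b 2)
    (by rw [hS, ← he]; intro x hx; simp only [Set.mem_insert_iff, Set.mem_singleton_iff] at hx ⊢; tauto)
  have hab21 : a 2 ≠ b 1 := fun he => hcon (a 0) (a 1) (a 2) (b 0) (b 2)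
    (by rw [hS, ← he]; intro x hx; simp only [Set.mem_insert_iff, Set.mem_singleton_iff] at hx ⊢; tauto)
  have haa : ∀ i j : Fin 3, i ≠ j → a i ≠ a j := by
    intro i j hij
    fin_cases i <;> fin_cases j <;>
      first
        | exact absurd rfl hij
        | exact haa01 | exact haa01.symm
        | exact haa02 | exact haa02.symm
        | exact haa12 | exact haa12.symm
  have hab : ∀ i j : Fin 3, a i ≠ b j := by
    intro i j
    fin_cases i <;> fin_cases j <;>
      first
        | exact hab00 | exact hab11 | exact hab22
        | exact hab01 | exact hab02 | exact hab10
        | exact hab12 | exact hab20 | exact hab21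
  -- the sums a i + b i are all equal
  have hsum : ∀ i, a i + b i = a 0 + b 0 := by
    have h1 := htr 0 1 (by decide)
    have h2 := htr 0 2 (by decide)
    intro i
    fin_cases i
    · rfl
    · show a 1 + b 1 = a 0 + b 0
      linear_combination -h1
    · show a 2 + b 2 = a 0 + b 0
      linear_combination -h2
  have hsum' : ∀ i j : Fin 3, ∀ k, a i k + b i k = a j k + b j k := by
    intro i j k
    have h := congrFun ((hsum i).trans (hsum j).symm) k
    simpa using h
  -- expressing differences via the v i = a i - b i
  have key1 : ∀ i j : Fin 3, a i - a j = (1/2 : ℝ) • ((a i - b i) - (a j - b j)) := by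
    intro i j
    funext k
    have h := hsum' i j k
    simp only [Pi.sub_apply, Pi.smul_apply, smul_eq_mul]
    linarith
  have key2 : ∀ i j : Fin 3, a i - b j = (1/2 : ℝ) • ((a i - b i) + (a j - b j)) := by
    intro i j
    funext k
    have h := hsum' i j k
    simp only [Pi.sub_apply, Pi.add_apply, Pi.smul_apply, smul_eq_mul]
    linarith
  -- norms of the octahedron vertices and their sums/differences
  have hneg : ∀ x, N (-x) = N x := by
    intro x
    have := hN.smul (-1) x
    simpa using this
  have hv : ∀ i, N (a i - b i) = 1 := fun i => heq _ (ma i) _ (mb i) (hab i i)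
  have hdiff : ∀ i j : Fin 3, i ≠ j → N ((a i - b i) - (a j - b j)) = 2 := by
    intro i j hij
    have h := heq _ (ma i) _ (ma j) (haa i j hij)
    rw [key1 i j, hN.smul] at h
    rw [abs_of_pos (by norm_num : (0:ℝ) < 1/2)] at h
    linarith
  have hsumN : ∀ i j : Fin 3, i ≠ j → N ((a i - b i) + (a j - b j)) = 2 := by
    intro i j hij
    have h := heq _ (ma i) _ (mb j) (hab i j)
    rw [key2 i j, hN.smul] at h
    rw [abs_of_pos (by norm_num : (0:ℝ) < 1/2)] at h
    linarith
  -- frontier characterization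
  have hfr : ∀ x, N x = 1 → x ∈ frontier {y : Fin 3 → ℝ | N y ≤ 1} := by
    intro x hx
    rw [frontier_eq_closure_inter_closure]
    constructor
    · exact subset_closure (by simp [Set.mem_setOf_eq, hx])
    · have h0 : Filter.Tendsto (fun n : ℕ => 1/((n : ℝ)+1)) Filter.atTop (nhds 0) :=
        tendsto_one_div_add_atTop_nhds_zero_nat
      have h1 : Filter.Tendsto (fun n : ℕ => (1 + 1/((n : ℝ)+1))) Filter.atTop (nhds 1) := by
        simpa using Filter.Tendsto.add (tendsto_const_nhds (x := (1:ℝ))) h0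
      have htend : Filter.Tendsto (fun n : ℕ => (1 + 1/((n : ℝ)+1)) • x)
          Filter.atTop (nhds x) := by
        have h2 := h1.smul_const x
        simpa using h2
      refine mem_closure_of_tendsto htend (Filter.Eventually.of_forall (fun n => ?_))
      simp only [Set.mem_compl_iff, Set.mem_setOf_eq, not_le]
      rw [hN.smul, hx, mul_one]
      have hpos : (0:ℝ) < 1/((n:ℝ)+1) := by positivity
      rw [abs_of_pos (by linarith)]
      linarith
  have seg_lemma : ∀ u w : Fin 3 → ℝ, N u = 1 → N w = 1 → N (u + w) = 2 →
      ∀ x ∈ segment ℝ u w, N x = 1 := by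
    intro u w hNu hNw hNuw x hx
    obtain ⟨p, q, hp, hq, hpq, rfl⟩ := hx
    have hle : ∀ s t : ℝ, 0 ≤ s → 0 ≤ t → s + t = 1 → N (s • u + t • w) ≤ 1 := by
      intro s t hs ht hst
      have e1 : N (s • u) = |s| * N u := hN.smul s u
      have e2 : N (t • w) = |t| * N w := hN.smul t w
      have e3 := hN.triangle (s • u) (t • w)
      rw [e1, e2, abs_of_nonneg hs, abs_of_nonneg ht, hNu, hNw] at e3
      linarith
    have h1 : N (p • u + q • w) ≤ 1 := hle p q hp hq hpq
    have h2 : N (q • u + p • w) ≤ 1 := hle q p hq hp (by linarith)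
    have hsplit : (p • u + q • w) + (q • u + p • w) = u + w := by
      funext k
      simp only [Pi.add_apply, Pi.smul_apply, smul_eq_mul]
      linear_combination (u k) * hpq + (w k) * hpq
    have hge : 1 ≤ N (p • u + q • w) := by
      have := hN.triangle (p • u + q • w) (q • u + p • w)
      rw [hsplit, hNuw] at this
      linarith
    exact le_antisymm h1 hge
  constructor
  · -- the skeleton lies on the boundary
    intro i j hij ε δ hε hδ x hx
    have hNu : N (ε • (a i - b i)) = 1 := by
      rcases hε with h | h <;> rw [h, hN.smul] <;> simp [hv i]
    have hNw : N (δ • (a j - b j)) = 1 := by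
      rcases hδ with h | h <;> rw [h, hN.smul] <;> simp [hv j]
    have hNuw : N (ε • (a i - b i) + δ • (a j - b j)) = 2 := by
      rcases hε with h | h <;> rcases hδ with h' | h' <;> rw [h, h']
      · simpa [one_smul] using hsumN i j hij
      · have e : (1:ℝ) • (a i - b i) + (-1:ℝ) • (a j - b j)
            = (a i - b i) - (a j - b j) := by
          funext k
          simp only [Pi.add_apply, Pi.sub_apply, Pi.smul_apply, smul_eq_mul]
          ring
        rw [e]; exact hdiff i j hij
      · have e : (-1:ℝ) • (a i - b i) + (1:ℝ) • (a j - b j)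
            = -((a i - b i) - (a j - b j)) := by
          funext k
          simp only [Pi.add_apply, Pi.sub_apply, Pi.neg_apply, Pi.smul_apply, smul_eq_mul]
          ring
        rw [e, hneg]; exact hdiff i j hij
      · have e : (-1:ℝ) • (a i - b i) + (-1:ℝ) • (a j - b j)
            = -((a i - b i) + (a j - b j)) := by
          funext k
          simp only [Pi.add_apply, Pi.sub_apply, Pi.neg_apply, Pi.smul_apply, smul_eq_mul]
          ring
        rw [e, hneg]; exact hsumN i j hij
    exact hfr _ (seg_lemma _ _ hNu hNw hNuw x hx)
  · -- homothety
    refine ⟨(1/2 : ℝ) • (a 0 + b 0), (1/2 : ℝ), by norm_num, ?_⟩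
    have hga : ∀ i, (1/2 : ℝ) • (a 0 + b 0) + (1/2 : ℝ) • (a i - b i) = a i := by
      intro i
      funext k
      have h := hsum' i 0 k
      simp only [Pi.add_apply, Pi.sub_apply, Pi.smul_apply, smul_eq_mul]
      linarith
    have hgb : ∀ i, (1/2 : ℝ) • (a 0 + b 0) + (1/2 : ℝ) • (-(a i - b i)) = b i := by
      intro i
      funext k
      have h := hsum' i 0 k
      simp only [Pi.add_apply, Pi.sub_apply, Pi.neg_apply, Pi.smul_apply, smul_eq_mul]
      linarith
    rw [hS]
    rw [Set.image_insert_eq, Set.image_insert_eq, Set.image_insert_eq,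
      Set.image_insert_eq, Set.image_insert_eq, Set.image_singleton]
    simp only [hga, hgb]
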